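/- arXiv:1912.06301 — 5 statements merged into one kernel-verified Lean document; each statement's English description precedes it below -/
import Mathlib

section
/- For a positive integer N, the derivative of the falling factorial polynomial x(x-1)...(x-N+1) equals the sum over t from 1 to N of ((-1)^(t+1)/t) * N(N-1)...(N-t+1) * x(x-1)...(x-(N-t)+1). -/
/-- Falling factorial `x(x-1)⋯(x-n+1)`. -/
noncomputable def ff (x : ℝ) (n : ℕ) : ℝ := ∏ i ∈ Finset.range n, (x - i)

lemma ff_zero (x : ℝ) : ff x 0 = 1 := by simp [ff]

lemma ff_succ (x : ℝ) (n : ℕ) : ff x (n+1) = ff x n * (x - n) := by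
  simp [ff, Finset.prod_range_succ]

lemma ff_succ_left (y : ℝ) (m : ℕ) : ff (y+1) (m+1) = (y+1) * ff y m := by
  unfold ff
  rw [Finset.prod_range_succ']
  simp [mul_comm]

lemma ff_pascal (N i : ℕ) : ff ((N:ℝ)+1) (i+1) = ff N (i+1) + (i+1) * ff N i := by
  rw [ff_succ_left, ff_succ]
  ring

lemma ff_nat_self_succ (N : ℕ) : ff (N:ℝ) (N+1) = 0 := by
  apply Finset.prod_eq_zero (i := N) (by simp)
  simp

lemma differentiable_ff (n : ℕ) : Differentiable ℝ (fun y : ℝ => ff y n) := by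
  induction n with
  | zero => simp [ff_zero]
  | succ n ih =>
      simp only [ff_succ]
      exact ih.mul ((differentiable_id).sub_const _)

lemma deriv_ff_succ (n : ℕ) (x : ℝ) :
    deriv (fun y : ℝ => ff y (n+1)) x
      = deriv (fun y : ℝ => ff y n) x * (x - n) + ff x n := by
  have h : (fun y : ℝ => ff y (n+1)) = fun y : ℝ => ff y n * (y - n) := by
    funext y; rw [ff_succ]
  have h2 : DifferentiableAt ℝ (fun y : ℝ => y - (n:ℝ)) x := by fun_prop
  rw [h, deriv_fun_mul ((differentiable_ff n) x) h2]
  simp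

lemma key (N : ℕ) (x : ℝ) :
    ∑ i ∈ Finset.range (N+1), ((-1:ℝ)^i/(i+1)) * ff (↑(N+1)) (i+1) * ff x (N+1-(i+1))
      = (∑ i ∈ Finset.range N, ((-1:ℝ)^i/(i+1)) * ff ↑N (i+1) * ff x (N-(i+1))) * (x - N)
        + ff x N := by
  have hsplit : ∀ i ∈ Finset.range (N+1),
      ((-1:ℝ)^i/(i+1)) * ff (↑(N+1)) (i+1) * ff x (N+1-(i+1))
        = ((-1:ℝ)^i/(i+1)) * ff ↑N (i+1) * ff x (N-i)
          + (-1:ℝ)^i * ff ↑N i * ff x (N-i) := by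
    intro i _
    have hererw : (N + 1 - (i+1)) = N - i := by omega
    rw [hererw]
    push_cast
    rw [ff_pascal]
    have hne : ((i:ℝ)+1) ≠ 0 := by positivity
    field_simp
  rw [Finset.sum_congr rfl hsplit, Finset.sum_add_distrib]
  -- first sum: last term vanishes
  rw [Finset.sum_range_succ (f := fun i => ((-1:ℝ)^i/(i+1)) * ff ↑N (i+1) * ff x (N-i))]
  rw [show ff (↑N:ℝ) (N+1) = 0 from ff_nat_self_succ N]
  -- second sum: peel first term
  rw [Finset.sum_range_succ' (f := fun i => (-1:ℝ)^i * ff ↑N i * ff x (N-i))]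
  simp only [ff_zero, Nat.sub_zero, pow_zero, one_mul, mul_zero, zero_mul, mul_one, add_zero]
  rw [Finset.sum_mul, ← add_assoc]
  congr 1
  rw [← Finset.sum_add_distrib]
  apply Finset.sum_congr rfl
  intro i hi
  have hi' : i < N := Finset.mem_range.mp hi
  set m := N - 1 - i with hm
  have h1 : N - i = m + 1 := by omega
  have h2 : N - (i+1) = m := by omega
  have h3 : (N:ℝ) = (m:ℝ) + i + 1 := by
    have : N = m + i + 1 := by omega
    rw [this]; push_cast; ring
  rw [h1, h2, show ff x (m+1) = ff x m * (x - (m:ℝ)) from ff_succ x m, h3]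
  have hne : ((i:ℝ)+1) ≠ 0 := by positivity
  field_simp
  ring

lemma main_range (N : ℕ) (x : ℝ) :
    deriv (fun y : ℝ => ff y N) x
      = ∑ i ∈ Finset.range N, ((-1:ℝ)^i/(i+1)) * ff ↑N (i+1) * ff x (N-(i+1)) := by
  induction N with
  | zero => simp [ff_zero]
  | succ n ih =>
      rw [deriv_ff_succ, ih, key n x]

set_option linter.unusedVariables false in
theorem stmt0 (N : ℕ) (hN : 0 < N) (x : ℝ) :
    deriv (fun y : ℝ => ff y N) x =
      ∑ t ∈ Finset.Icc 1 N, ((-1 : ℝ) ^ (t + 1) / t) * ff (N : ℝ) t * ff x (N - t) := by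
  rw [main_range]
  rw [show Finset.Icc 1 N = Finset.Ico 1 (N+1) by rw [Finset.Ico_add_one_right_eq_Icc]]
  rw [Finset.sum_Ico_eq_sum_range]
  simp only [Nat.add_sub_cancel]
  apply Finset.sum_congr rfl
  intro i _
  have : ((-1:ℝ))^(1+i+1) = (-1:ℝ)^i := by
    rw [show 1+i+1 = i+2 from by omega, pow_add]
    simp
  rw [this]
  push_cast
  ring_nf
end

section
/- Let λ be a k-singular partition. Then the coefficient r_λ := -H_λ(k)/H'_{λ†}(k) satisfies the closed-form r_λ = (-1)^{k+λ1+λ2} (λ1-λ2)^{\underline{k+1}} / ((2k+2-λ1+λ2)! (λ1-λ2-k-2)!). -/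
/-- `H_λ(κ) = (λ₁-λ₂)! λ₂! (λ₁-1-κ)^{underline{λ₂}}`. -/
noncomputable def Hpol (l1 l2 : ℕ) (κ : ℝ) : ℝ :=
  ((l1 - l2).factorial : ℝ) * (l2.factorial : ℝ) * ff ((l1 : ℝ) - 1 - κ) l2

private lemma prod_shift : ∀ (n : ℕ) (c : ℕ),
    (∏ i ∈ Finset.range n, ((n : ℝ) + 1 + (c : ℝ) - (i : ℝ))) * ((c + 1).factorial : ℝ)
      = ((n + 1 + c).factorial : ℝ)
  | 0, c => by simp [Nat.add_comm]
  | n + 1, c => by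
    rw [Finset.prod_range_succ]
    have h1 : ∀ i ∈ Finset.range n,
        (((n : ℕ) + 1 : ℕ) : ℝ) + 1 + (c : ℝ) - (i : ℝ) = (n : ℝ) + 1 + ((c + 1 : ℕ) : ℝ) - i := by
      intro i _; push_cast; ring
    have h2 : (((n : ℕ) + 1 : ℕ) : ℝ) + 1 + (c : ℝ) - ((n : ℕ) : ℝ) = ((c : ℝ) + 2) := by
      push_cast; ring
    rw [Finset.prod_congr rfl h1, h2]
    have h3 := prod_shift n (c + 1)
    have h4 : (n + 1 + (c + 1)) = (n + 1 + 1 + c) := by omega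
    rw [h4] at h3
    calc (∏ i ∈ Finset.range n, ((n : ℝ) + 1 + ((c + 1 : ℕ) : ℝ) - (i : ℝ))) * ((c : ℝ) + 2) *
          ((c + 1).factorial : ℝ)
        = (∏ i ∈ Finset.range n, ((n : ℝ) + 1 + ((c + 1 : ℕ) : ℝ) - (i : ℝ))) *
          ((c + 1 + 1).factorial : ℝ) := by
          rw [Nat.factorial_succ (c + 1)]; push_cast; ring
      _ = ((n + 1 + 1 + c).factorial : ℝ) := h3

private lemma prod_asc (n : ℕ) : (∏ i ∈ Finset.range n, ((i : ℝ) + 1)) = (n.factorial : ℝ) := by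
  induction n with
  | zero => simp
  | succ n ih => rw [Finset.prod_range_succ, ih, Nat.factorial_succ]; push_cast; ring

private lemma prod_desc (n : ℕ) :
    (∏ i ∈ Finset.range n, ((n : ℝ) - (i : ℝ))) = (n.factorial : ℝ) := by
  induction n with
  | zero => simp
  | succ n ih =>
    rw [Finset.prod_range_succ']
    have h1 : ∀ i ∈ Finset.range n,
        (((n : ℕ) + 1 : ℕ) : ℝ) - ((i + 1 : ℕ) : ℝ) = (n : ℝ) - i := by
      intro i _; push_cast; ring
    rw [Finset.prod_congr rfl h1, ih, Nat.factorial_succ]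
    push_cast; ring

theorem stmt4 (k l1 l2 : ℕ) (h21 : l2 ≤ l1)
    (hs1 : k + 2 ≤ l1 - l2) (hs2 : l1 - l2 ≤ 2 * k + 2) :
    deriv (Hpol (l2 + k + 1) (l1 - k - 1)) (k : ℝ) ≠ 0 ∧
    -(Hpol l1 l2 (k : ℝ)) / deriv (Hpol (l2 + k + 1) (l1 - k - 1)) (k : ℝ) =
      (-1 : ℝ) ^ (k + l1 + l2) * ff ((l1 : ℝ) - (l2 : ℝ)) (k + 1) /
        (((2 * k + 2 - (l1 - l2)).factorial : ℝ) * ((l1 - l2 - k - 2).factorial : ℝ)) := by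
  classical
  obtain ⟨e, he, rfl⟩ : ∃ e, e ≤ k ∧ l1 = l2 + k + 2 + e :=
    ⟨l1 - l2 - k - 2, by omega, by omega⟩
  set s : Finset ℕ := (Finset.range (l2 + 1 + e)).erase l2 with hs
  set g : ℝ → ℝ := fun κ => ∏ i ∈ s, ((l2 : ℝ) + k - κ - i) with hg
  have hm : l2 + k + 2 + e - k - 1 = l2 + 1 + e := by omega
  have hsub : (l2 + k + 1) - (l2 + 1 + e) = k - e := by omega
  set C : ℝ := ((k - e).factorial : ℝ) * ((l2 + 1 + e).factorial : ℝ) with hC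
  have hHfun : Hpol (l2 + k + 1) (l2 + 1 + e) = fun κ => C * (((k : ℝ) - κ) * g κ) := by
    funext κ
    rw [Hpol, ff, hsub, hC]
    have hmem : l2 ∈ Finset.range (l2 + 1 + e) := by simp only [Finset.mem_range]; omega
    rw [← Finset.mul_prod_erase _ _ hmem]
    have h1 : ((l2 + k + 1 : ℕ) : ℝ) - 1 - κ - (l2 : ℝ) = (k : ℝ) - κ := by push_cast; ring
    have h2 : ∀ i ∈ s, ((l2 + k + 1 : ℕ) : ℝ) - 1 - κ - (i : ℝ) = (l2 : ℝ) + k - κ - i := by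
      intro i _; push_cast; ring
    rw [h1, Finset.prod_congr rfl h2]
  have hgd : DifferentiableAt ℝ g (k : ℝ) := by
    apply DifferentiableAt.fun_finsetProd
    intro i _
    exact ((differentiableAt_const _).sub differentiableAt_id).sub_const _
  have hder1 : HasDerivAt (fun κ : ℝ => ((k : ℝ) - κ) * g κ)
      ((-1) * g k + ((k : ℝ) - k) * deriv g k) (k : ℝ) :=
    ((hasDerivAt_id (k : ℝ)).const_sub (k : ℝ)).mul hgd.hasDerivAt
  have hderiv : deriv (Hpol (l2 + k + 1) (l2 + 1 + e)) (k : ℝ) = C * (-(g k)) := by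
    rw [hHfun, (hder1.const_mul C).deriv]
    ring
  -- value of g at k
  have hsplit : s = Finset.range l2 ∪ Finset.Ico (l2 + 1) (l2 + 1 + e) := by
    ext i
    simp only [hs, Finset.mem_erase, Finset.mem_range, Finset.mem_union, Finset.mem_Ico]
    omega
  have hdisj : Disjoint (Finset.range l2) (Finset.Ico (l2 + 1) (l2 + 1 + e)) := by
    simp only [Finset.disjoint_left, Finset.mem_range, Finset.mem_Ico]
    omega
  have hgk : g (k : ℝ) = (l2.factorial : ℝ) * ((-1 : ℝ) ^ e * (e.factorial : ℝ)) := by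
    rw [hg]
    simp only
    have h2 : ∀ i ∈ s, ((l2 : ℝ) + k - k - i) = ((l2 : ℝ) - i) := by intro i _; ring
    rw [Finset.prod_congr rfl h2, hsplit, Finset.prod_union hdisj, prod_desc]
    congr 1
    rw [Finset.prod_Ico_eq_prod_range]
    have h3 : l2 + 1 + e - (l2 + 1) = e := by omega
    rw [h3]
    have h4 : ∀ i ∈ Finset.range e, ((l2 : ℝ) - ((l2 + 1 + i : ℕ) : ℝ)) = (-1) * ((i : ℝ) + 1) := by
      intro i _; push_cast; ring
    rw [Finset.prod_congr rfl h4, Finset.prod_mul_distrib, Finset.prod_const, prod_asc]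
    simp
  -- positivity facts
  have f1 : ((k - e).factorial : ℝ) ≠ 0 := Nat.cast_ne_zero.mpr (Nat.factorial_ne_zero _)
  have f2 : ((l2 + 1 + e).factorial : ℝ) ≠ 0 := Nat.cast_ne_zero.mpr (Nat.factorial_ne_zero _)
  have f3 : ((l2).factorial : ℝ) ≠ 0 := Nat.cast_ne_zero.mpr (Nat.factorial_ne_zero _)
  have f4 : ((e).factorial : ℝ) ≠ 0 := Nat.cast_ne_zero.mpr (Nat.factorial_ne_zero _)
  have f5 : ((e + 1).factorial : ℝ) ≠ 0 := Nat.cast_ne_zero.mpr (Nat.factorial_ne_zero _)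
  have f6 : ((k + 2 + e).factorial : ℝ) ≠ 0 := Nat.cast_ne_zero.mpr (Nat.factorial_ne_zero _)
  have f7 : ((-1 : ℝ)) ^ e ≠ 0 := pow_ne_zero _ (by norm_num)
  have hne : deriv (Hpol (l2 + k + 1) (l2 + 1 + e)) (k : ℝ) ≠ 0 := by
    rw [hderiv, hgk, hC]
    exact mul_ne_zero (mul_ne_zero f1 f2)
      (neg_ne_zero.mpr (mul_ne_zero f3 (mul_ne_zero f7 f4)))
  rw [hm]
  refine ⟨hne, ?_⟩
  -- closed form of Hpol l1 l2 k
  have hd1 : (l2 + k + 2 + e) - l2 = k + 2 + e := by omega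
  have hHval : Hpol (l2 + k + 2 + e) l2 (k : ℝ) =
      ((k + 2 + e).factorial : ℝ) * (l2.factorial : ℝ) *
        (∏ i ∈ Finset.range l2, ((l2 : ℝ) + 1 + (e : ℝ) - (i : ℝ))) := by
    rw [Hpol, ff, hd1]
    congr 1
    apply Finset.prod_congr rfl
    intro i _; push_cast; ring
  have hffval : ff ((↑(l2 + k + 2 + e) : ℝ) - (l2 : ℝ)) (k + 1) =
      ∏ i ∈ Finset.range (k + 1), (((k + 1 : ℕ) : ℝ) + 1 + (e : ℝ) - (i : ℝ)) := by
    rw [ff]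
    apply Finset.prod_congr rfl
    intro i _; push_cast; ring
  have hA := prod_shift l2 e
  have hB := prod_shift (k + 1) e
  have hd2 : 2 * k + 2 - ((l2 + k + 2 + e) - l2) = k - e := by omega
  have hd3 : (l2 + k + 2 + e) - l2 - k - 2 = e := by omega
  have hd4 : k + 1 + 1 + e = k + 2 + e := by omega
  rw [hd4] at hB
  have hAe : (∏ i ∈ Finset.range l2, ((l2 : ℝ) + 1 + (e : ℝ) - (i : ℝ)))
      = ((l2 + 1 + e).factorial : ℝ) / ((e + 1).factorial : ℝ) := by
    rw [eq_div_iff f5]; exact hA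
  have hBe : (∏ i ∈ Finset.range (k + 1), (((k + 1 : ℕ) : ℝ) + 1 + (e : ℝ) - (i : ℝ)))
      = ((k + 2 + e).factorial : ℝ) / ((e + 1).factorial : ℝ) := by
    rw [eq_div_iff f5]; exact hB
  have hsign : ((-1 : ℝ)) ^ (k + (l2 + k + 2 + e) + l2) = (-1 : ℝ) ^ e := by
    have : k + (l2 + k + 2 + e) + l2 = 2 * (k + l2 + 1) + e := by omega
    rw [this, pow_add, pow_mul, neg_one_sq, one_pow, one_mul]
  rw [hderiv, hgk, hHval, hffval, hAe, hBe, hd2, hd3, hsign, hC]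
  rw [div_eq_div_iff]
  · rcases Nat.even_or_odd e with hev | hod
    · rw [hev.neg_one_pow]; ring
    · rw [hod.neg_one_pow]; ring
  · intro h
    rcases mul_eq_zero.mp h with h | h
    · rcases mul_eq_zero.mp h with h | h
      · exact f1 h
      · exact f2 h
    · rcases mul_eq_zero.mp (neg_eq_zero.mp h) with h | h
      · exact f3 h
      · rcases mul_eq_zero.mp h with h | h
        · exact f7 h
        · exact f4 h
  · intro h
    rcases mul_eq_zero.mp h with h | h
    · exact f1 h
    · exact f4 h
end

section
/- With λ = (d+k+1, d+ℓ+1), 0 ≤ ℓ ≤ k, d ≥ 0, the derivative of H_λ(κ)/(κ-k) at κ = k, in the limit sense H'_λ(k) = lim_{κ→k} H_λ(κ)/(κ-k), equals (-1)^{ℓ+1} (k-ℓ)! (d+ℓ+1)! d! ℓ!. -/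
lemma prod_aux (d : ℕ) : ∏ i ∈ Finset.range d, ((d : ℝ) - i) = d.factorial := by
  induction d with
  | zero => simp
  | succ n ih =>
      rw [Finset.prod_range_succ']
      have h1 : ∀ i ∈ Finset.range n, ((n : ℝ) + 1 - ((i : ℝ) + 1)) = (n : ℝ) - i := by
        intro i _; ring
      push_cast
      rw [Finset.prod_congr rfl h1, ih, Nat.factorial_succ]
      push_cast
      ring

lemma prod_erase_aux (d l : ℕ) :
    ∏ i ∈ (Finset.range (d + l + 1)).erase d, ((d : ℝ) - i) =
      (-1) ^ l * d.factorial * l.factorial := by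
  induction l with
  | zero =>
      have : Finset.range (d + 1) = insert d (Finset.range d) := Finset.range_add_one
      rw [show d + 0 + 1 = d + 1 from rfl, this,
        Finset.erase_insert (by simp), prod_aux]
      simp
  | succ m ih =>
      have hmem : d + m + 1 ∈ Finset.range (d + m + 1 + 1) := by simp
      have hne : d + m + 1 ≠ d := by omega
      have : (Finset.range (d + (m + 1) + 1)).erase d =
          insert (d + m + 1) ((Finset.range (d + m + 1)).erase d) := by
        rw [show d + (m + 1) + 1 = (d + m + 1) + 1 from by ring, Finset.range_add_one,
          Finset.erase_insert_of_ne hne]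
      rw [this, Finset.prod_insert (by simp), ih, Nat.factorial_succ]
      push_cast
      ring

theorem stmt7 (k l d : ℕ) (hlk : l ≤ k) :
    Filter.Tendsto (fun κ : ℝ => Hpol (d + k + 1) (d + l + 1) κ / (κ - k))
      (nhdsWithin (k : ℝ) {(k : ℝ)}ᶜ)
      (nhds ((-1 : ℝ) ^ (l + 1) * ((k - l).factorial : ℝ) * ((d + l + 1).factorial : ℝ) *
        (d.factorial : ℝ) * (l.factorial : ℝ))) := by
  set C : ℝ := ((d + k + 1 - (d + l + 1)).factorial : ℝ) * ((d + l + 1).factorial : ℝ) with hC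
  set g : ℝ → ℝ := fun κ =>
    -C * ∏ i ∈ (Finset.range (d + l + 1)).erase d, ((d : ℝ) + k - κ - i) with hg
  have hd : d ∈ Finset.range (d + l + 1) := Finset.mem_range.mpr (by omega)
  have key : ∀ κ : ℝ, κ ≠ (k : ℝ) →
      Hpol (d + k + 1) (d + l + 1) κ / (κ - k) = g κ := by
    intro κ hκ
    have hx : ((d + k + 1 : ℕ) : ℝ) - 1 - κ = (d : ℝ) + k - κ := by push_cast; ring
    have hne : κ - (k : ℝ) ≠ 0 := sub_ne_zero.mpr hκ
    rw [Hpol, ff, hx, ← Finset.mul_prod_erase _ _ hd, hg]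
    have h2 : (d : ℝ) + k - κ - d = -(κ - k) := by ring
    rw [h2, hC]
    field_simp
  have hcont : Continuous g := by
    apply Continuous.mul continuous_const
    exact continuous_finset_prod _ (fun i _ => by continuity)
  have hgk : g k = (-1 : ℝ) ^ (l + 1) * ((k - l).factorial : ℝ) *
      ((d + l + 1).factorial : ℝ) * (d.factorial : ℝ) * (l.factorial : ℝ) := by
    have h3 : ∀ i ∈ (Finset.range (d + l + 1)).erase d,
        ((d : ℝ) + k - k - i) = (d : ℝ) - i := by intro i _; ring
    rw [hg]
    simp only
    rw [Finset.prod_congr rfl h3, prod_erase_aux, hC]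
    have h4 : d + k + 1 - (d + l + 1) = k - l := by omega
    rw [h4]
    ring
  have := (hcont.tendsto (k : ℝ)).mono_left (nhdsWithin_le_nhds (s := {(k : ℝ)}ᶜ))
  rw [hgk] at this
  refine Filter.Tendsto.congr' ?_ this
  filter_upwards [self_mem_nhdsWithin] with x hx
  exact (key x hx).symm
end

section
/- For a partition λ = (λ1, λ2) and the two-variable Knop–Sahi polynomial P^κ_λ, the evaluation P^κ_λ(λ1 - κ - 1, λ2) equals H_λ(κ) := (λ1-λ2)! λ2! (λ1-1-κ)^{\underline{λ2}}, as an identity of rational functions of κ. -/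
open Polynomial Finset

/-- Falling factorial in the field `ℚ(κ)`. -/
noncomputable def ffF (a : RatFunc ℚ) (n : ℕ) : RatFunc ℚ :=
  ∏ i ∈ Finset.range n, (a - (i : RatFunc ℚ))

instance : CharZero (RatFunc ℚ) :=
  charZero_of_injective_algebraMap (algebraMap ℚ (RatFunc ℚ)).injective

lemma ffF_eval (a : RatFunc ℚ) (n : ℕ) :
    ffF a n = (descPochhammer (RatFunc ℚ) n).eval a := by
  induction n with
  | zero => simp [ffF]
  | succ n ih => rw [ffF, Finset.prod_range_succ, ← ffF, ih, descPochhammer_succ_eval]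

lemma ffF_smeval (a : RatFunc ℚ) (n : ℕ) :
    ffF a n = (descPochhammer ℤ n).smeval a := by
  induction n with
  | zero => simp [ffF, descPochhammer_zero, Polynomial.smeval_one]
  | succ n ih =>
    rw [ffF, Finset.prod_range_succ, ← ffF, ih, descPochhammer_succ_right,
      Polynomial.smeval_mul, Polynomial.smeval_sub, Polynomial.smeval_X,
      Polynomial.smeval_natCast]
    simp

lemma ffF_natCast (m n : ℕ) : ffF (m : RatFunc ℚ) n = (m.descFactorial n : RatFunc ℚ) := by
  rw [ffF_eval, descPochhammer_eval_eq_descFactorial]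

lemma ffF_add (a : RatFunc ℚ) (m k : ℕ) :
    ffF a (m + k) = ffF a m * ffF (a - (m : RatFunc ℚ)) k := by
  rw [ffF, Finset.prod_range_add, ← ffF, ffF]
  congr 1
  refine Finset.prod_congr rfl fun i _ => ?_
  push_cast
  ring

lemma ffF_X_add_one_ne_zero (n : ℕ) : ffF (RatFunc.X + 1) n ≠ 0 := by
  rw [ffF]
  refine Finset.prod_ne_zero_iff.mpr fun i _ => ?_
  have : (RatFunc.X + 1 - (i : RatFunc ℚ)) =
      algebraMap (Polynomial ℚ) (RatFunc ℚ) (Polynomial.X + 1 - (i : Polynomial ℚ)) := by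
    simp [RatFunc.algebraMap_X]
  rw [this]
  refine RatFunc.algebraMap_ne_zero ?_
  intro hzero
  have := congrArg (fun p => Polynomial.coeff p 1) hzero
  simp [Polynomial.coeff_one] at this

lemma ffF_vandermonde (r s : RatFunc ℚ) (k : ℕ) :
    ffF (r + s) k = ∑ ij ∈ Finset.HasAntidiagonal.antidiagonal k,
      (k.choose ij.1 : RatFunc ℚ) * (ffF r ij.1 * ffF s ij.2) := by
  rw [ffF_smeval, Ring.descPochhammer_smeval_add k (Commute.all r s)]
  simp [← ffF_smeval]

lemma ffF_key (n : ℕ) :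
    ∑ i ∈ Finset.range (n + 1),
      (n.choose i : RatFunc ℚ) *
        (ffF ((n : RatFunc ℚ) - RatFunc.X - 1) i * ffF (RatFunc.X + 1) (n - i)) =
      (n.factorial : RatFunc ℚ) := by
  have h := ffF_vandermonde ((n : RatFunc ℚ) - RatFunc.X - 1) (RatFunc.X + 1) n
  rw [Finset.Nat.sum_antidiagonal_eq_sum_range_succ_mk] at h
  have harg : ((n : RatFunc ℚ) - RatFunc.X - 1) + (RatFunc.X + 1) = (n : RatFunc ℚ) := by ring
  rw [harg, ffF_natCast, Nat.descFactorial_self] at h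
  exact h.symm


/-- The two-variable Knop–Sahi polynomial `P^κ_λ(x,y)`, evaluated in `ℚ(κ)`. -/
noncomputable def KSfun (l1 l2 : ℕ) (κ x y : RatFunc ℚ) : RatFunc ℚ :=
  ∑ i ∈ Finset.range (l1 - l2 + 1), ∑ j ∈ Finset.range (l1 - l2 + 1 - i),
    ((l1 - l2).factorial : RatFunc ℚ) * ffF (κ + 1) (l1 - l2 - i) *
        ffF (κ + 1) (l1 - l2 - j) /
      ((i.factorial : RatFunc ℚ) * (j.factorial : RatFunc ℚ) *
        ((l1 - l2 - i - j).factorial : RatFunc ℚ) * ffF (κ + 1) (l1 - l2)) *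
      ffF x (l2 + i) * ffF y (l2 + j)

theorem stmt14 (l1 l2 : ℕ) (h : l2 ≤ l1) :
    KSfun l1 l2 RatFunc.X ((l1 : RatFunc ℚ) - RatFunc.X - 1) (l2 : RatFunc ℚ) =
      ((l1 - l2).factorial : RatFunc ℚ) * (l2.factorial : RatFunc ℚ) *
        ffF ((l1 : RatFunc ℚ) - 1 - RatFunc.X) l2 := by
  obtain ⟨n, rfl⟩ := Nat.exists_eq_add_of_le h
  have hsub : l2 + n - l2 = n := by omega
  set x : RatFunc ℚ := ((l2 + n : ℕ) : RatFunc ℚ) - RatFunc.X - 1 with hxdef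
  rw [KSfun]
  simp only [hsub]
  have hy0 : ∀ j : ℕ, j ≠ 0 → ffF ((l2 : RatFunc ℚ)) (l2 + j) = 0 := by
    intro j hj
    rw [ffF_natCast, Nat.descFactorial_eq_zero_iff_lt.mpr (by omega), Nat.cast_zero]
  have hinner : ∀ i ∈ Finset.range (n + 1),
      (∑ j ∈ Finset.range (n + 1 - i),
        (n.factorial : RatFunc ℚ) * ffF (RatFunc.X + 1) (n - i) *
            ffF (RatFunc.X + 1) (n - j) /
          ((i.factorial : RatFunc ℚ) * (j.factorial : RatFunc ℚ) *
            ((n - i - j).factorial : RatFunc ℚ) * ffF (RatFunc.X + 1) n) *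
          ffF x (l2 + i) * ffF ((l2 : RatFunc ℚ)) (l2 + j)) =
      ((l2.factorial : RatFunc ℚ) * ffF x l2) *
        ((n.choose i : RatFunc ℚ) *
          (ffF ((n : RatFunc ℚ) - RatFunc.X - 1) i * ffF (RatFunc.X + 1) (n - i))) := by
    intro i hi
    have hi' : i ≤ n := by simpa [Nat.lt_succ_iff] using hi
    rw [Finset.sum_eq_single_of_mem 0 (by simp; omega)
      (fun j _ hj => by rw [hy0 j hj, mul_zero])]
    have hyl2 : ffF ((l2 : RatFunc ℚ)) (l2 + 0) = (l2.factorial : RatFunc ℚ) := by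
      rw [add_zero, ffF_natCast, Nat.descFactorial_self]
    have hxsplit : ffF x (l2 + i) =
        ffF x l2 * ffF ((n : RatFunc ℚ) - RatFunc.X - 1) i := by
      rw [ffF_add]
      congr 1
      rw [hxdef]
      push_cast
      ring
    have hfac : (n.factorial : RatFunc ℚ) =
        (n.choose i : RatFunc ℚ) * (i.factorial : RatFunc ℚ) * ((n - i).factorial : RatFunc ℚ) := by
      exact_mod_cast congrArg (Nat.cast (R := RatFunc ℚ))
        (Nat.choose_mul_factorial_mul_factorial hi').symm
    rw [hyl2, hxsplit, Nat.sub_zero, Nat.sub_zero]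
    rw [hfac]
    have h1 : (ffF (RatFunc.X + 1) n) ≠ 0 := ffF_X_add_one_ne_zero n
    have h2 : (i.factorial : RatFunc ℚ) ≠ 0 := Nat.cast_ne_zero.mpr i.factorial_ne_zero
    have h3 : ((n - i).factorial : RatFunc ℚ) ≠ 0 := Nat.cast_ne_zero.mpr (n - i).factorial_ne_zero
    field_simp
    ring
  rw [Finset.sum_congr rfl hinner, ← Finset.mul_sum, ffF_key]
  have : x = ((l2 + n : ℕ) : RatFunc ℚ) - 1 - RatFunc.X := by rw [hxdef]; ring
  rw [this]
  ring
end

section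
/- Distinctness of Casimir eigenvalues: fix integers d ≥ 0 and k ≥ 0. For partitions λ, μ of the same size d (λ1+λ2 = μ1+μ2 = d), one has c_λ = c_μ with λ ≠ μ if and only if {λ, μ} is a pair of the form {ν, ν†} where ν is k-quasiregular with ν ≠ ν†, where c_λ := (λ2-λ1)(2k+2+λ2-λ1) and ν† := (ν2+k+1, ν1-k-1). -/
def IsPartition (p : ℤ × ℤ) : Prop := 0 ≤ p.2 ∧ p.2 ≤ p.1

def KQuasiregular (k : ℤ) (p : ℤ × ℤ) : Prop :=
  IsPartition p ∧ k + 1 ≤ p.1 ∧ p.1 - p.2 ≤ k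

def casimirEig (k : ℤ) (p : ℤ × ℤ) : ℤ := (p.2 - p.1) * (2 * k + 2 + p.2 - p.1)

def dag (k : ℤ) (p : ℤ × ℤ) : ℤ × ℤ := (p.2 + k + 1, p.1 - k - 1)

theorem stmt18 (k : ℤ) (hk : 0 ≤ k) (d : ℤ) (hd : 0 ≤ d) (l m : ℤ × ℤ)
    (hl : IsPartition l) (hm : IsPartition m)
    (hld : l.1 + l.2 = d) (hmd : m.1 + m.2 = d) :
    (casimirEig k l = casimirEig k m ∧ l ≠ m) ↔
      ∃ ν : ℤ × ℤ, IsPartition ν ∧ KQuasiregular k ν ∧ ν ≠ dag k ν ∧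
        ({l, m} : Set (ℤ × ℤ)) = {ν, dag k ν} := by
  obtain ⟨hl2, hl12⟩ := hl
  obtain ⟨hm2, hm12⟩ := hm
  constructor
  · rintro ⟨hc, hne⟩
    have key : (l.1 - l.2 - (m.1 - m.2)) * ((l.1 - l.2) + (m.1 - m.2) - (2*k+2)) = 0 := by
      unfold casimirEig at hc; linear_combination hc
    have hab : l.1 - l.2 ≠ m.1 - m.2 := by
      intro h
      apply hne
      have h1 : l.1 = m.1 := by omega
      have h2 : l.2 = m.2 := by omega
      exact Prod.ext h1 h2
    have hsum : (l.1 - l.2) + (m.1 - m.2) = 2*k+2 := by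
      rcases mul_eq_zero.mp key with h | h
      · omega
      · omega
    rcases lt_or_gt_of_ne hab with h | h
    · -- l has smaller gap, ν = l, dag l = m
      refine ⟨l, ⟨hl2, hl12⟩, ⟨⟨hl2, hl12⟩, by omega, by omega⟩, ?_, ?_⟩
      · intro heq
        apply hne
        have : m = dag k l := by
          simp only [dag, Prod.ext_iff]
          constructor <;> omega
        rw [this, ← heq]
      · have : m = dag k l := by
          simp only [dag, Prod.ext_iff]
          constructor <;> omega
        rw [← this]
    · -- m has smaller gap, ν = m, dag m = l
      refine ⟨m, ⟨hm2, hm12⟩, ⟨⟨hm2, hm12⟩, by omega, by omega⟩, ?_, ?_⟩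
      · intro heq
        apply hne
        have : l = dag k m := by
          simp only [dag, Prod.ext_iff]
          constructor <;> omega
        rw [this, ← heq]
      · have : l = dag k m := by
          simp only [dag, Prod.ext_iff]
          constructor <;> omega
        rw [this, Set.pair_comm]
  · rintro ⟨ν, hν, hνq, hνne, hset⟩
    have hcd : casimirEig k ν = casimirEig k (dag k ν) := by
      unfold casimirEig dag; ring
    rcases Set.pair_eq_pair_iff.mp hset with ⟨h1, h2⟩ | ⟨h1, h2⟩
    · exact ⟨by rw [h1, h2]; exact hcd, by rw [h1, h2]; exact hνne⟩
    · exact ⟨by rw [h1, h2]; exact hcd.symm, by rw [h1, h2]; exact fun h => hνne h.symm⟩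
end
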